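/- Let n ≥ 1, p : Fin n → ℝ with 0 < p j ≤ 1, and D : Fin n → ℝ with 0 ≤ D 0 ≤ D 1 ≤ … ≤ D (n-1). Define cost(k) = (1 + ∑_{j≤k} p j * D j * ∏_{i<j}(1 - p i)) / (1 - ∏_{j≤k}(1 - p j)) for 0 ≤ k ≤ n-1. Suppose cost(n-1) ≥ D (n-1) (the full-set cost is at least the largest member distance). Then cost is monotone nonincreasing in k: cost(0) ≥ cost(1) ≥ … ≥ cost(n-1). -/

import Mathlib

open Finset

/-- Pure real-arithmetic core of the adjacent step. Here `N` plays the role of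
`1 + S k`, `P` of `∏_{j≤k}(1-p j)`, `q` of `p (k+1)`, `Dq` of `D (k+1)`. -/
lemma anypath_step_ineq (N P q Dq : ℝ) (hP0 : 0 ≤ P) (hP1 : P < 1)
    (hq : 0 < q) (hq1 : q ≤ 1)
    (h : Dq ≤ (N + q * Dq * P) / (1 - P * (1 - q))) :
    (N + q * Dq * P) / (1 - P * (1 - q)) ≤ N / (1 - P) ∧ Dq ≤ N / (1 - P) := by
  have h1 : 0 < 1 - P := by linarith
  have h2 : 0 < 1 - P * (1 - q) := by nlinarith
  have h3 : Dq * (1 - P * (1 - q)) ≤ N + q * Dq * P := (le_div_iff₀ h2).1 h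
  have h4 : Dq * (1 - P) ≤ N := by nlinarith
  constructor
  · rw [div_le_div_iff₀ h2 h1]
    have hqP : 0 ≤ q * P := mul_nonneg hq.le hP0
    nlinarith [mul_le_mul_of_nonneg_left h4 hqP]
  · exact (le_div_iff₀ h1).2 h4

theorem anypath_prefix_cost_monotone (n : ℕ) (p D : Fin (n + 1) → ℝ)
    (hp : ∀ j, 0 < p j ∧ p j ≤ 1)
    (hD0 : 0 ≤ D 0) (hmono : Monotone D) :
    let cost : Fin (n + 1) → ℝ := fun k =>
      (1 + ∑ j ∈ Finset.Iic k, p j * D j * ∏ i ∈ Finset.Iio j, (1 - p i)) /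
        (1 - ∏ j ∈ Finset.Iic k, (1 - p j))
    D (Fin.last n) ≤ cost (Fin.last n) →
      ∀ k k' : Fin (n + 1), k ≤ k' → cost k' ≤ cost k := by
  intro cost hlast
  set Pk : Fin (n + 1) → ℝ := fun k => ∏ j ∈ Finset.Iic k, (1 - p j) with hPk
  set Sk : Fin (n + 1) → ℝ :=
    fun k => ∑ j ∈ Finset.Iic k, p j * D j * ∏ i ∈ Finset.Iio j, (1 - p i) with hSk
  have costdef : ∀ k, cost k = (1 + Sk k) / (1 - Pk k) := fun k => rfl
  have hfac0 : ∀ j : Fin (n + 1), 0 ≤ 1 - p j := fun j => by linarith [(hp j).2]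
  have hP0 : ∀ k, 0 ≤ Pk k := fun k => Finset.prod_nonneg fun j _ => hfac0 j
  have hP1 : ∀ k, Pk k < 1 := by
    intro k
    have h0 : (0 : Fin (n + 1)) ∈ Finset.Iic k := by simp [Finset.mem_Iic]
    have := Finset.prod_eq_mul_prod_sdiff_singleton_of_mem h0 (fun j => 1 - p j)
    have hrest : ∏ j ∈ Finset.Iic k \ {0}, (1 - p j) ≤ 1 :=
      Finset.prod_le_one (fun j _ => hfac0 j) (fun j _ => by linarith [(hp j).1])
    have hrest0 : 0 ≤ ∏ j ∈ Finset.Iic k \ {0}, (1 - p j) :=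
      Finset.prod_nonneg fun j _ => hfac0 j
    have hp0 := (hp 0).1
    calc Pk k = (1 - p 0) * ∏ j ∈ Finset.Iic k \ {0}, (1 - p j) := this
      _ ≤ (1 - p 0) * 1 := by
          apply mul_le_mul_of_nonneg_left hrest (hfac0 0)
      _ < 1 := by linarith
  -- adjacent step
  have adjacent : ∀ i (hi : i < n),
      D ⟨i + 1, by omega⟩ ≤ cost ⟨i + 1, by omega⟩ →
      cost ⟨i + 1, by omega⟩ ≤ cost ⟨i, by omega⟩ ∧
        D ⟨i, by omega⟩ ≤ cost ⟨i, by omega⟩ := by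
    intro i hi hDb
    set a : Fin (n + 1) := ⟨i, by omega⟩ with ha
    set b : Fin (n + 1) := ⟨i + 1, by omega⟩ with hb
    have hnot : b ∉ Finset.Iic a := by
      rw [ha, hb, Finset.mem_Iic, Fin.mk_le_mk]; omega
    have hIic : Finset.Iic b = insert b (Finset.Iic a) := by
      ext j
      simp only [Finset.mem_Iic, Finset.mem_insert, Fin.le_def, ha, hb, Fin.ext_iff]
      omega
    have hIio : Finset.Iio b = Finset.Iic a := by
      ext j
      simp only [Finset.mem_Iio, Finset.mem_Iic, Fin.le_def, Fin.lt_def, ha, hb]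
      omega
    have hPrec : Pk b = (1 - p b) * Pk a := by
      rw [hPk]; simp only [hIic, Finset.prod_insert hnot]
    have hSrec : Sk b = p b * D b * Pk a + Sk a := by
      rw [hSk]; simp only [hIic, Finset.sum_insert hnot, hIio]; rfl
    have hab : a ≤ b := by rw [ha, hb, Fin.mk_le_mk]; omega
    have key := anypath_step_ineq (1 + Sk a) (Pk a) (p b) (D b)
      (hP0 a) (hP1 a) (hp b).1 (hp b).2
      (by
        have : (1 + Sk a + p b * D b * Pk a) / (1 - Pk a * (1 - p b)) = cost b := by
          rw [costdef, hPrec, hSrec]; ring_nf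
        rw [this]; exact hDb)
    have hcb : cost b = (1 + Sk a + p b * D b * Pk a) / (1 - Pk a * (1 - p b)) := by
      rw [costdef, hPrec, hSrec]; ring_nf
    refine ⟨?_, ?_⟩
    · rw [hcb, costdef]; exact key.1
    · calc D a ≤ D b := hmono hab
        _ ≤ (1 + Sk a) / (1 - Pk a) := key.2
        _ = cost a := (costdef a).symm
  -- downward induction: D ⟨m⟩ ≤ cost ⟨m⟩ for all m ≤ n
  have key : ∀ j, (hj : j ≤ n) → D ⟨n - j, by omega⟩ ≤ cost ⟨n - j, by omega⟩ := by
    intro j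
    induction j with
    | zero =>
      intro _
      have e : (⟨n - 0, by omega⟩ : Fin (n + 1)) = Fin.last n := by
        simp [Fin.ext_iff, Fin.last]
      rw [e]; exact hlast
    | succ j ih =>
      intro hj
      have h1 := ih (by omega)
      have hlt : n - (j + 1) < n := by omega
      have e : (⟨n - (j + 1) + 1, by omega⟩ : Fin (n + 1)) = ⟨n - j, by omega⟩ := by
        simp [Fin.ext_iff]; omega
      have h1' : D ⟨n - (j + 1) + 1, by omega⟩ ≤ cost ⟨n - (j + 1) + 1, by omega⟩ := by
        rw [e]; exact h1
      exact (adjacent (n - (j + 1)) hlt h1').2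
  have hDm : ∀ m, (hm : m ≤ n) → D ⟨m, by omega⟩ ≤ cost ⟨m, by omega⟩ := by
    intro m hm
    have e : (⟨n - (n - m), by omega⟩ : Fin (n + 1)) = ⟨m, by omega⟩ := by
      simp [Fin.ext_iff]; omega
    have := key (n - m) (by omega)
    rwa [e] at this
  have step : ∀ i, (hi : i < n) → cost ⟨i + 1, by omega⟩ ≤ cost ⟨i, by omega⟩ := by
    intro i hi
    exact (adjacent i hi (hDm (i + 1) (by omega))).1
  have chain : ∀ d i : ℕ, (h : i + d ≤ n) →
      cost ⟨i + d, by omega⟩ ≤ cost ⟨i, by omega⟩ := by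
    intro d
    induction d with
    | zero => intro i h; exact le_rfl
    | succ d ih =>
      intro i h
      calc cost ⟨i + (d + 1), by omega⟩ ≤ cost ⟨i + d, by omega⟩ := step (i + d) (by omega)
        _ ≤ cost ⟨i, by omega⟩ := ih i (by omega)
  intro k k' hkk'
  have hk' : k'.1 ≤ n := Nat.lt_succ_iff.mp k'.isLt
  have hkk : k.1 ≤ k'.1 := hkk'
  have := chain (k'.1 - k.1) k.1 (by omega)
  have e1 : (⟨k.1 + (k'.1 - k.1), by omega⟩ : Fin (n + 1)) = k' := by
    simp [Fin.ext_iff]; omega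
  have e2 : (⟨k.1, by omega⟩ : Fin (n + 1)) = k := by simp [Fin.ext_iff]
  rwa [e1, e2] at this
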